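/- arXiv:1303.6642 — 6 statements merged into one kernel-verified Lean document; each statement's English description precedes it below -/
import Mathlib

section
/- Let I ⊆ S = K[x_1, ..., x_n] be a monomial ideal and let a ∈ ℕ^n be a vector such that every minimal monomial generator of I divides x^a. Then applying generalized Alexander duality with respect to a twice recovers I: (I^[a])^[a] = I. -/
open MvPolynomial

/-- `I` is a monomial ideal: it is generated by monomials. -/
def IsMonomialIdeal {n : ℕ} {K : Type*} [Field K] (I : Ideal (MvPolynomial (Fin n) K)) : Prop :=
  ∃ B : Set (Fin n →₀ ℕ), I = Ideal.span ((fun b => monomial b (1 : K)) '' B)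

/-- `x^b` is a minimal monomial generator of the monomial ideal `I`:
`x^b ∈ I` and no proper monomial divisor of `x^b` lies in `I`. -/
def IsMinGen {n : ℕ} {K : Type*} [Field K] (I : Ideal (MvPolynomial (Fin n) K))
    (b : Fin n →₀ ℕ) : Prop :=
  monomial b (1 : K) ∈ I ∧ ∀ b' : Fin n →₀ ℕ, b' ≤ b → b' ≠ b → monomial b' (1 : K) ∉ I

/-- The generalized Alexander dual `I^[a]` of a monomial ideal `I` with respect to the
vector `a`: the intersection, over the minimal monomial generators `x^b` of `I`, of the
irreducible ideals `(x_i^{a_i + 1 - b_i} : b_i ≥ 1)`. -/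
noncomputable def alexDual {n : ℕ} {K : Type*} [Field K] (I : Ideal (MvPolynomial (Fin n) K))
    (a : Fin n → ℕ) : Ideal (MvPolynomial (Fin n) K) :=
  ⨅ b ∈ {b : Fin n →₀ ℕ | IsMinGen I b},
    Ideal.span {p | ∃ i : Fin n, 1 ≤ b i ∧ p = X i ^ (a i + 1 - b i)}

section Aux

variable {n : ℕ} {K : Type*} [Field K]

/-- A monomial lies in the span of a set of monomials iff some generator divides it. -/
lemma AD.monomial_mem_span_iff (B : Set (Fin n →₀ ℕ)) (c : Fin n →₀ ℕ) :
    monomial c (1 : K) ∈ Ideal.span ((fun b => monomial b (1 : K)) '' B) ↔ ∃ b ∈ B, b ≤ c := by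
  rw [mem_ideal_span_monomial_image]
  simp [support_monomial]

lemma AD.dvd_mem (I : Ideal (MvPolynomial (Fin n) K)) {b c : Fin n →₀ ℕ} (h : b ≤ c)
    (hb : monomial b (1 : K) ∈ I) : monomial c (1 : K) ∈ I := by
  have hmul : monomial c (1 : K) = monomial (c - b) (1 : K) * monomial b 1 := by
    rw [monomial_mul, one_mul, tsub_add_cancel_of_le h]
  rw [hmul]
  exact Ideal.mul_mem_left _ _ hb

/-- A monomial lies in an ideal iff some minimal monomial generator divides it. -/
lemma AD.mem_iff_minGen (I : Ideal (MvPolynomial (Fin n) K)) (c : Fin n →₀ ℕ) :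
    monomial c (1 : K) ∈ I ↔ ∃ b, IsMinGen I b ∧ b ≤ c := by
  constructor
  · intro hc
    obtain ⟨b, ⟨hbI, hbc⟩, hmin⟩ := (Finsupp.lt_wf (Fin n)).has_min
        {b | monomial b (1 : K) ∈ I ∧ b ≤ c} ⟨c, hc, le_refl c⟩
    refine ⟨b, ⟨hbI, ?_⟩, hbc⟩
    intro b' hb' hne hb'I
    exact hmin b' ⟨hb'I, hb'.trans hbc⟩ (lt_of_le_of_ne hb' hne)
  · rintro ⟨b, ⟨hbI, _⟩, hbc⟩
    exact AD.dvd_mem I hbc hbI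

lemma AD.irr_set_eq (b : Fin n →₀ ℕ) (a : Fin n → ℕ) :
    {p : MvPolynomial (Fin n) K | ∃ i : Fin n, 1 ≤ b i ∧ p = X i ^ (a i + 1 - b i)}
      = (fun d => monomial d (1 : K)) ''
        {d | ∃ i : Fin n, 1 ≤ b i ∧ d = Finsupp.single i (a i + 1 - b i)} := by
  ext p
  simp only [Set.mem_setOf_eq, Set.mem_image]
  constructor
  · rintro ⟨i, hi, rfl⟩
    exact ⟨Finsupp.single i (a i + 1 - b i), ⟨i, hi, rfl⟩, X_pow_eq_monomial.symm⟩
  · rintro ⟨d, ⟨i, hi, rfl⟩, rfl⟩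
    exact ⟨i, hi, X_pow_eq_monomial.symm⟩

/-- Monomial membership criterion for the Alexander dual. -/
lemma AD.mem_alexDual_iff (I : Ideal (MvPolynomial (Fin n) K)) (a : Fin n → ℕ)
    (c : Fin n →₀ ℕ) :
    monomial c (1 : K) ∈ alexDual I a ↔
      ∀ b, IsMinGen I b → ∃ i, 1 ≤ b i ∧ a i + 1 - b i ≤ c i := by
  unfold alexDual
  simp only [Ideal.mem_iInf, Set.mem_setOf_eq]
  refine forall_congr' fun b => forall_congr' fun _ => ?_
  rw [AD.irr_set_eq, AD.monomial_mem_span_iff]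
  constructor
  · rintro ⟨d, ⟨i, hi, rfl⟩, hd⟩
    exact ⟨i, hi, Finsupp.single_le_iff.mp hd⟩
  · rintro ⟨i, hi, h⟩
    exact ⟨_, ⟨i, hi, rfl⟩, Finsupp.single_le_iff.mpr h⟩

/-- An ideal closed under taking monomials of members equals the span of its monomials. -/
lemma AD.span_of_monomial_closed (T : Ideal (MvPolynomial (Fin n) K))
    (hT : ∀ p ∈ T, ∀ c ∈ p.support, monomial c (1 : K) ∈ T) :
    T = Ideal.span ((fun c => monomial c (1 : K)) '' {c | monomial c (1 : K) ∈ T}) := by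
  apply le_antisymm
  · intro p hp
    rw [p.as_sum]
    apply Ideal.sum_mem
    intro c hc
    have h1 : monomial c (1 : K) ∈
        Ideal.span ((fun c => monomial c (1 : K)) '' {c | monomial c (1 : K) ∈ T}) :=
      Ideal.subset_span ⟨c, hT p hp c hc, rfl⟩
    have h2 : monomial c (coeff c p) = C (coeff c p) * monomial c 1 := by
      rw [C_mul_monomial, mul_one]
    rw [h2]
    exact Ideal.mul_mem_left _ _ h1
  · rw [Ideal.span_le]
    rintro q ⟨c, hc, rfl⟩
    exact hc

lemma AD.span_monomial_closed (B : Set (Fin n →₀ ℕ)) :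
    ∀ p ∈ Ideal.span ((fun b => monomial b (1 : K)) '' B), ∀ c ∈ p.support,
      monomial c (1 : K) ∈ Ideal.span ((fun b => monomial b (1 : K)) '' B) := by
  intro p hp c hc
  rw [AD.monomial_mem_span_iff]
  exact mem_ideal_span_monomial_image.mp hp c hc

lemma AD.alexDual_monomial_closed (I : Ideal (MvPolynomial (Fin n) K)) (a : Fin n → ℕ) :
    ∀ p ∈ alexDual I a, ∀ c ∈ p.support, monomial c (1 : K) ∈ alexDual I a := by
  intro p hp c hc
  unfold alexDual at hp ⊢
  simp only [Ideal.mem_iInf] at hp ⊢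
  intro b hb
  have hpb := hp b hb
  rw [AD.irr_set_eq] at hpb ⊢
  exact AD.span_monomial_closed _ p hpb c hc

/-- Truncation: membership in the Alexander dual only depends on `c ⊓ a`. -/
lemma AD.alexDual_trunc (T : Ideal (MvPolynomial (Fin n) K)) (a : Fin n → ℕ)
    (c : Fin n →₀ ℕ) :
    monomial (c ⊓ Finsupp.equivFunOnFinite.symm a) (1 : K) ∈ alexDual T a ↔
      monomial c (1 : K) ∈ alexDual T a := by
  rw [AD.mem_alexDual_iff, AD.mem_alexDual_iff]
  refine forall_congr' fun b => forall_congr' fun _ => exists_congr fun i => ?_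
  have h : (c ⊓ Finsupp.equivFunOnFinite.symm a) i = min (c i) (a i) := by
    rw [Finsupp.inf_apply]; rfl
  rw [h]
  omega

/-- The key duality: for `c ≤ a`, `x^c ∈ T^[a]` iff `x^{a-c} ∉ T`. -/
lemma AD.alexDual_dual_mem (T : Ideal (MvPolynomial (Fin n) K)) (a : Fin n → ℕ)
    (hTa : ∀ b, IsMinGen T b → ∀ i, b i ≤ a i)
    (c : Fin n →₀ ℕ) (hc : ∀ i, c i ≤ a i) :
    monomial c (1 : K) ∈ alexDual T a ↔
      monomial (Finsupp.equivFunOnFinite.symm a - c) (1 : K) ∉ T := by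
  rw [AD.mem_alexDual_iff, AD.mem_iff_minGen]
  push_neg
  refine forall_congr' fun b => ?_
  refine imp_congr_right fun hb => ?_
  constructor
  · intro h hble
    obtain ⟨i, hi1, hi2⟩ := h
    have h3 := Finsupp.le_def.mp hble i
    rw [Finsupp.tsub_apply] at h3
    have h4 : (Finsupp.equivFunOnFinite.symm a) i = a i := rfl
    rw [h4] at h3
    have h5 := hc i
    omega
  · intro hnle'
    have hnle : ¬ b ≤ Finsupp.equivFunOnFinite.symm a - c := hnle'
    rw [Finsupp.le_def] at hnle
    push_neg at hnle
    obtain ⟨i, hi⟩ := hnle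
    rw [Finsupp.tsub_apply] at hi
    have h4 : (Finsupp.equivFunOnFinite.symm a) i = a i := rfl
    rw [h4] at hi
    have h5 := hc i
    have h6 := hTa b hb i
    exact ⟨i, by omega, by omega⟩

end Aux

/-- If `I` is a monomial ideal all of whose minimal monomial generators
divide `x^a`, then taking the generalized Alexander dual with respect to `a` twice
recovers `I`: `(I^[a])^[a] = I`. -/
theorem alexDual_alexDual {n : ℕ} {K : Type*} [Field K]
    (I : Ideal (MvPolynomial (Fin n) K)) (a : Fin n → ℕ)
    (hmono : IsMonomialIdeal I)
    (hdiv : ∀ b : Fin n →₀ ℕ, IsMinGen I b → ∀ i, b i ≤ a i) :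
    alexDual (alexDual I a) a = I := by
  set aF : Fin n →₀ ℕ := Finsupp.equivFunOnFinite.symm a with haF
  have haF_apply : ∀ i, aF i = a i := fun i => rfl
  -- minimal generators of the dual are bounded by `a`
  have hJa : ∀ b, IsMinGen (alexDual I a) b → ∀ i, b i ≤ a i := by
    intro b hb i
    by_contra hlt
    have h1 : monomial (b ⊓ aF) (1 : K) ∈ alexDual I a :=
      (AD.alexDual_trunc I a b).mpr hb.1
    have h2 : b ⊓ aF ≤ b := inf_le_left
    have h3 : b ⊓ aF ≠ b := by
      intro h
      apply hlt
      have := congrArg (fun f : Fin n →₀ ℕ => f i) h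
      simp only [Finsupp.inf_apply] at this
      have h4 : aF i = a i := rfl
      rw [h4] at this
      omega
    exact hb.2 _ h2 h3 h1
  -- key: the two ideals have the same monomials
  have key : ∀ c, monomial c (1 : K) ∈ alexDual (alexDual I a) a ↔ monomial c (1 : K) ∈ I := by
    intro c
    rw [← AD.alexDual_trunc (alexDual I a) a c]
    rw [AD.alexDual_dual_mem (alexDual I a) a hJa (c ⊓ aF)
      (fun i => by rw [Finsupp.inf_apply, haF_apply]; exact min_le_right _ _)]
    have hsub_le : ∀ i, (aF - c ⊓ aF) i ≤ a i := by
      intro i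
      rw [Finsupp.tsub_apply, haF_apply]
      exact Nat.sub_le _ _
    rw [AD.alexDual_dual_mem I a hdiv (aF - c ⊓ aF) hsub_le]
    have hcancel : aF - (aF - c ⊓ aF) = c ⊓ aF :=
      tsub_tsub_cancel_of_le inf_le_right
    rw [hcancel, not_not]
    rw [AD.mem_iff_minGen, AD.mem_iff_minGen]
    constructor
    · rintro ⟨b, hb, hble⟩
      exact ⟨b, hb, hble.trans inf_le_left⟩
    · rintro ⟨b, hb, hble⟩
      refine ⟨b, hb, le_inf hble ?_⟩
      rw [Finsupp.le_def]
      intro i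
      rw [haF_apply]
      exact hdiv b hb i
  obtain ⟨B, hB⟩ := hmono
  have hIc : ∀ p ∈ I, ∀ c ∈ p.support, monomial c (1 : K) ∈ I := by
    rw [hB]; exact AD.span_monomial_closed B
  calc alexDual (alexDual I a) a
      = Ideal.span ((fun c => monomial c (1 : K)) ''
          {c | monomial c (1 : K) ∈ alexDual (alexDual I a) a}) :=
        AD.span_of_monomial_closed _ (AD.alexDual_monomial_closed _ a)
    _ = Ideal.span ((fun c => monomial c (1 : K)) '' {c | monomial c (1 : K) ∈ I}) := by
        rw [show {c | monomial c (1 : K) ∈ alexDual (alexDual I a) a}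
            = {c | monomial c (1 : K) ∈ I} from Set.ext fun c => key c]
    _ = I := (AD.span_of_monomial_closed I hIc).symm
end

section
/- Every monomial ideal I ⊆ S = K[x_1, ..., x_n] has a unique irredundant irreducible decomposition: there is a unique irredundant collection of irreducible monomial ideals Q_1, ..., Q_r with I = Q_1 ∩ ... ∩ Q_r. -/
open MvPolynomial

/-- `Q` is an irreducible monomial ideal: `Q = (x_i^{e_i} : i ∈ T)` for some set of
variables `T` and positive exponents `e_i` for `i ∈ T` (variables with exponent `∞`
are omitted, i.e. do not belong to `T`). -/
def IsIrreducibleMonomialIdeal {n : ℕ} {K : Type*} [Field K]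
    (Q : Ideal (MvPolynomial (Fin n) K)) : Prop :=
  ∃ (T : Finset (Fin n)) (e : Fin n → ℕ), (∀ i ∈ T, 1 ≤ e i) ∧
    Q = Ideal.span {p | ∃ i ∈ T, p = X i ^ e i}

namespace MonomialDecompAux

variable {n : ℕ} {K : Type*} [Field K]

attribute [local instance] Classical.propDecidable

/-- The monomial ideal generated by the monomials with exponent vectors in `B`. -/
noncomputable def mspan (K : Type*) [Field K] {n : ℕ} (B : Set (Fin n →₀ ℕ)) :
    Ideal (MvPolynomial (Fin n) K) :=
  Ideal.span ((fun b => monomial b (1 : K)) '' B)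

lemma isMonomialIdeal_iff {I : Ideal (MvPolynomial (Fin n) K)} :
    IsMonomialIdeal I ↔ ∃ B, I = mspan K B := Iff.rfl

lemma isMonomialIdeal_mspan (B : Set (Fin n →₀ ℕ)) : IsMonomialIdeal (mspan K B) := ⟨B, rfl⟩

lemma mem_mspan {p : MvPolynomial (Fin n) K} {B : Set (Fin n →₀ ℕ)} :
    p ∈ mspan K B ↔ ∀ m ∈ p.support, ∃ b ∈ B, b ≤ m :=
  MvPolynomial.mem_ideal_span_monomial_image

lemma monomial_mem_mspan {a : Fin n →₀ ℕ} {B : Set (Fin n →₀ ℕ)} :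
    monomial a (1 : K) ∈ mspan K B ↔ ∃ b ∈ B, b ≤ a := by
  classical
  rw [mem_mspan, support_monomial, if_neg one_ne_zero]
  simp

/-- The set of exponents of monomials belonging to `I`. -/
def expSet (I : Ideal (MvPolynomial (Fin n) K)) : Set (Fin n →₀ ℕ) :=
  {a | monomial a (1 : K) ∈ I}

lemma expSet_mspan (B : Set (Fin n →₀ ℕ)) :
    expSet (mspan K B) = {a | ∃ b ∈ B, b ≤ a} := by
  ext a; exact monomial_mem_mspan

lemma mspan_expSet {I : Ideal (MvPolynomial (Fin n) K)} (hI : IsMonomialIdeal I) :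
    mspan K (expSet I) = I := by
  obtain ⟨B, rfl⟩ := isMonomialIdeal_iff.mp hI
  apply le_antisymm
  · intro p hp
    rw [mem_mspan] at hp ⊢
    intro m hm
    obtain ⟨b, hb, hbm⟩ := hp m hm
    rw [expSet_mspan] at hb
    obtain ⟨c, hc, hcb⟩ := hb
    exact ⟨c, hc, hcb.trans hbm⟩
  · apply Ideal.span_mono
    apply Set.image_mono
    intro b hb
    rw [expSet_mspan]
    exact ⟨b, hb, le_rfl⟩

lemma le_iff_expSet {I J : Ideal (MvPolynomial (Fin n) K)} (hI : IsMonomialIdeal I)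
    (hJ : IsMonomialIdeal J) : I ≤ J ↔ expSet I ⊆ expSet J := by
  constructor
  · exact fun h a ha => h ha
  · intro h
    rw [← mspan_expSet hI, ← mspan_expSet hJ]
    exact Ideal.span_mono (Set.image_mono h)

lemma monomial_ideal_ext {I J : Ideal (MvPolynomial (Fin n) K)} (hI : IsMonomialIdeal I)
    (hJ : IsMonomialIdeal J) (h : expSet I = expSet J) : I = J := by
  rw [← mspan_expSet hI, ← mspan_expSet hJ, h]

lemma support_mem_expSet {I : Ideal (MvPolynomial (Fin n) K)} (hI : IsMonomialIdeal I)
    {p : MvPolynomial (Fin n) K} (hp : p ∈ I) {m : Fin n →₀ ℕ} (hm : m ∈ p.support) :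
    m ∈ expSet I := by
  obtain ⟨B, rfl⟩ := isMonomialIdeal_iff.mp hI
  rw [mem_mspan] at hp
  rw [expSet_mspan]
  exact hp m hm

lemma expSet_upper {I : Ideal (MvPolynomial (Fin n) K)} (hI : IsMonomialIdeal I)
    {a b : Fin n →₀ ℕ} (ha : a ∈ expSet I) (hab : a ≤ b) : b ∈ expSet I := by
  obtain ⟨B, rfl⟩ := isMonomialIdeal_iff.mp hI
  rw [expSet_mspan] at ha ⊢
  obtain ⟨c, hc, hca⟩ := ha
  exact ⟨c, hc, hca.trans hab⟩

lemma expSet_inf (I J : Ideal (MvPolynomial (Fin n) K)) :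
    expSet (I ⊓ J) = expSet I ∩ expSet J := rfl

lemma inf_eq_mspan {I J : Ideal (MvPolynomial (Fin n) K)} (hI : IsMonomialIdeal I)
    (hJ : IsMonomialIdeal J) : I ⊓ J = mspan K (expSet I ∩ expSet J) := by
  apply le_antisymm
  · intro p hp
    obtain ⟨hp1, hp2⟩ := Submodule.mem_inf.mp hp
    rw [mem_mspan]
    intro m hm
    exact ⟨m, ⟨support_mem_expSet hI hp1 hm, support_mem_expSet hJ hp2 hm⟩, le_rfl⟩
  · refine le_inf ?_ ?_
    · conv_rhs => rw [← mspan_expSet hI]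
      exact Ideal.span_mono (Set.image_mono Set.inter_subset_left)
    · conv_rhs => rw [← mspan_expSet hJ]
      exact Ideal.span_mono (Set.image_mono Set.inter_subset_right)

lemma isMonomialIdeal_inf {I J : Ideal (MvPolynomial (Fin n) K)} (hI : IsMonomialIdeal I)
    (hJ : IsMonomialIdeal J) : IsMonomialIdeal (I ⊓ J) :=
  ⟨_, inf_eq_mspan hI hJ⟩

lemma isMonomialIdeal_top : IsMonomialIdeal (⊤ : Ideal (MvPolynomial (Fin n) K)) := by
  refine ⟨{0}, ?_⟩
  refine ((Ideal.eq_top_iff_one _).mpr ?_).symm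
  have : monomial (0 : Fin n →₀ ℕ) (1 : K) ∈ mspan K {0} :=
    Ideal.subset_span ⟨0, rfl, rfl⟩
  simpa using this

lemma isMonomialIdeal_biInf (𝒬 : Finset (Ideal (MvPolynomial (Fin n) K)))
    (h : ∀ Q ∈ 𝒬, IsMonomialIdeal Q) : IsMonomialIdeal (⨅ Q ∈ 𝒬, Q) := by
  classical
  induction 𝒬 using Finset.induction with
  | empty => simpa using isMonomialIdeal_top
  | @insert A s hA ih =>
    rw [Finset.iInf_insert]
    exact isMonomialIdeal_inf (h A (Finset.mem_insert_self _ _))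
      (ih fun Q hQ => h Q (Finset.mem_insert_of_mem hQ))

lemma isIrreducible_iff {Q : Ideal (MvPolynomial (Fin n) K)} :
    IsIrreducibleMonomialIdeal Q ↔ ∃ (T : Finset (Fin n)) (e : Fin n → ℕ),
      (∀ i ∈ T, 1 ≤ e i) ∧ Q = mspan K ((fun i => Finsupp.single i (e i)) '' (T : Set (Fin n))) := by
  unfold IsIrreducibleMonomialIdeal
  refine exists_congr fun T => exists_congr fun e => and_congr_right fun he => ?_
  have hs : {p : MvPolynomial (Fin n) K | ∃ i ∈ T, p = X i ^ e i}
      = (fun b => monomial b (1 : K)) '' ((fun i => Finsupp.single i (e i)) '' (T : Set (Fin n))) := by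
    ext p
    simp only [Set.mem_setOf_eq, Set.mem_image, Finset.mem_coe, X_pow_eq_monomial]
    constructor
    · rintro ⟨i, hi, rfl⟩; exact ⟨_, ⟨i, hi, rfl⟩, rfl⟩
    · rintro ⟨_, ⟨i, hi, rfl⟩, rfl⟩; exact ⟨i, hi, rfl⟩
  rw [hs]
  rfl

lemma irr_isMonomialIdeal {Q : Ideal (MvPolynomial (Fin n) K)}
    (h : IsIrreducibleMonomialIdeal Q) : IsMonomialIdeal Q := by
  obtain ⟨T, e, he, rfl⟩ := isIrreducible_iff.mp h
  exact isMonomialIdeal_mspan _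

lemma expSet_irr (T : Finset (Fin n)) (e : Fin n → ℕ) :
    expSet (mspan K ((fun i => Finsupp.single i (e i)) '' (T : Set (Fin n))))
      = {a : Fin n →₀ ℕ | ∃ i ∈ T, e i ≤ a i} := by
  rw [expSet_mspan]
  ext a
  simp only [Set.mem_setOf_eq]
  constructor
  · rintro ⟨b, ⟨i, hi, rfl⟩, hba⟩
    exact ⟨i, hi, Finsupp.single_le_iff.mp hba⟩
  · rintro ⟨i, hi, h⟩
    exact ⟨_, ⟨i, hi, rfl⟩, Finsupp.single_le_iff.mpr h⟩

lemma irr_ne_top {Q : Ideal (MvPolynomial (Fin n) K)} (h : IsIrreducibleMonomialIdeal Q) :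
    Q ≠ ⊤ := by
  obtain ⟨T, e, he, rfl⟩ := isIrreducible_iff.mp h
  intro htop
  have h0 : (0 : Fin n →₀ ℕ) ∈ expSet (mspan K ((fun i => Finsupp.single i (e i)) '' (T : Set (Fin n)))) := by
    rw [htop]; trivial
  rw [expSet_irr] at h0
  obtain ⟨i, hi, hei⟩ := h0
  have h1 := he i hi
  simp only [Finsupp.coe_zero, Pi.zero_apply] at hei
  omega

lemma irr_inf_le {Q A B : Ideal (MvPolynomial (Fin n) K)} (hQ : IsIrreducibleMonomialIdeal Q)
    (hA : IsMonomialIdeal A) (hB : IsMonomialIdeal B) (h : A ⊓ B ≤ Q) : A ≤ Q ∨ B ≤ Q := by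
  obtain ⟨T, e, he, rfl⟩ := isIrreducible_iff.mp hQ
  by_contra hc
  push_neg at hc
  obtain ⟨hAQ, hBQ⟩ := hc
  have hQm : IsMonomialIdeal (mspan K ((fun i => Finsupp.single i (e i)) '' (T : Set (Fin n)))) := ⟨_, rfl⟩
  rw [le_iff_expSet hA hQm] at hAQ
  rw [le_iff_expSet hB hQm] at hBQ
  obtain ⟨a, ha, haQ⟩ := Set.not_subset.mp hAQ
  obtain ⟨b, hb, hbQ⟩ := Set.not_subset.mp hBQ
  have hab : a ⊔ b ∈ expSet (mspan K ((fun i => Finsupp.single i (e i)) '' (T : Set (Fin n)))) := by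
    apply h
    exact Submodule.mem_inf.mpr ⟨expSet_upper hA ha le_sup_left, expSet_upper hB hb le_sup_right⟩
  rw [expSet_irr] at hab haQ hbQ
  obtain ⟨i, hi, hei⟩ := hab
  rw [Finsupp.sup_apply] at hei
  rcases le_sup_iff.mp hei with h1 | h1
  · exact haQ ⟨i, hi, h1⟩
  · exact hbQ ⟨i, hi, h1⟩

lemma irr_biInf_le {Q : Ideal (MvPolynomial (Fin n) K)} (hQ : IsIrreducibleMonomialIdeal Q) :
    ∀ 𝒬 : Finset (Ideal (MvPolynomial (Fin n) K)), (∀ R ∈ 𝒬, IsMonomialIdeal R) →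
      ((⨅ R ∈ 𝒬, R) ≤ Q) → ∃ R ∈ 𝒬, R ≤ Q := by
  classical
  intro 𝒬
  induction 𝒬 using Finset.induction with
  | empty =>
    intro _ h
    simp only [Finset.notMem_empty, iInf_false, iInf_top] at h
    exact absurd (top_unique h) (irr_ne_top hQ)
  | @insert A s hA ih =>
    intro hmon h
    rw [Finset.iInf_insert] at h
    rcases irr_inf_le hQ (hmon A (Finset.mem_insert_self _ _))
        (isMonomialIdeal_biInf s fun R hR => hmon R (Finset.mem_insert_of_mem hR)) h with h1 | h2
    · exact ⟨A, Finset.mem_insert_self _ _, h1⟩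
    · obtain ⟨R, hR, hRQ⟩ := ih (fun R hR => hmon R (Finset.mem_insert_of_mem hR)) h2
      exact ⟨R, Finset.mem_insert_of_mem hR, hRQ⟩

lemma exists_finset_mspan (B : Set (Fin n →₀ ℕ)) :
    ∃ F : Finset (Fin n →₀ ℕ), mspan K ↑F = mspan K B := by
  classical
  have hnoeth : IsNoetherian (MvPolynomial (Fin n) K) (MvPolynomial (Fin n) K) := inferInstance
  obtain ⟨M, hM, hmax⟩ := set_has_maximal_iff_noetherian.mpr hnoeth
    {J | ∃ F : Finset (Fin n →₀ ℕ), ↑F ⊆ B ∧ J = mspan K ↑F}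
    ⟨mspan K ↑(∅ : Finset (Fin n →₀ ℕ)), ∅, by simp, rfl⟩
  obtain ⟨F, hFB, rfl⟩ := hM
  refine ⟨F, le_antisymm (Ideal.span_mono (Set.image_mono hFB)) ?_⟩
  rw [mspan, Ideal.span_le]
  rintro _ ⟨b, hbB, rfl⟩
  by_contra hnb
  have hlt : mspan K ↑F < mspan K ((insert b F : Finset (Fin n →₀ ℕ)) : Set (Fin n →₀ ℕ)) := by
    refine lt_of_le_of_ne (Ideal.span_mono (Set.image_mono ?_)) ?_
    · rw [Finset.coe_insert]; exact Set.subset_insert _ _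
    · intro heq
      apply hnb
      rw [heq]
      exact Ideal.subset_span ⟨b, by simp, rfl⟩
  exact hmax (mspan K ((insert b F : Finset (Fin n →₀ ℕ)) : Set (Fin n →₀ ℕ)))
    ⟨insert b F, by rw [Finset.coe_insert]; exact Set.insert_subset hbB hFB, rfl⟩ hlt


lemma mspan_eq_top_of_zero_mem {F : Finset (Fin n →₀ ℕ)} (h0 : 0 ∈ F) :
    mspan K (F : Set (Fin n →₀ ℕ)) = ⊤ := by
  refine (Ideal.eq_top_iff_one _).mpr ?_
  have : monomial (0 : Fin n →₀ ℕ) (1 : K) ∈ mspan K (F : Set (Fin n →₀ ℕ)) :=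
    Ideal.subset_span ⟨0, h0, rfl⟩
  simpa using this

lemma exists_decomp :
    ∀ (N : ℕ) (F : Finset (Fin n →₀ ℕ)), (∑ b ∈ F, b.support.card) < N →
    ∃ 𝒬 : Finset (Ideal (MvPolynomial (Fin n) K)),
      (∀ Q ∈ 𝒬, IsIrreducibleMonomialIdeal Q) ∧
        mspan K (F : Set (Fin n →₀ ℕ)) = ⨅ Q ∈ 𝒬, Q := by
  classical
  intro N
  induction N with
  | zero => exact fun F hF => absurd hF (Nat.not_lt_zero _)
  | succ N ih =>
    intro F hF
    by_cases hsplit : ∃ b ∈ F, 2 ≤ b.support.card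
    · obtain ⟨b, hbF, hb2⟩ := hsplit
      obtain ⟨i, hi⟩ := Finset.card_pos.mp (show 0 < b.support.card by omega)
      have hbi : b i ≠ 0 := Finsupp.mem_support_iff.mp hi
      set b₁ : Fin n →₀ ℕ := Finsupp.single i (b i) with hb₁
      set b₂ : Fin n →₀ ℕ := b.erase i with hb₂
      set F₁ : Finset (Fin n →₀ ℕ) := insert b₁ (F.erase b) with hF₁
      set F₂ : Finset (Fin n →₀ ℕ) := insert b₂ (F.erase b) with hF₂
      have hsupp1 : b₁.support.card = 1 := by
        rw [hb₁, Finsupp.support_single_ne_zero i hbi, Finset.card_singleton]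
      have hsupp2 : b₂.support.card = b.support.card - 1 := by
        rw [hb₂, Finsupp.support_erase, Finset.card_erase_of_mem hi]
      have hsum : ∑ c ∈ F, c.support.card
          = b.support.card + ∑ c ∈ F.erase b, c.support.card := by
        conv_lhs => rw [← Finset.insert_erase hbF]
        rw [Finset.sum_insert (Finset.notMem_erase _ _)]
      have e1 : ∑ c ∈ F₁, c.support.card ≤ 1 + ∑ c ∈ F.erase b, c.support.card := by
        by_cases h : b₁ ∈ F.erase b
        · rw [hF₁, Finset.insert_eq_of_mem h]; omega
        · rw [hF₁, Finset.sum_insert h, hsupp1]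
      have e2 : ∑ c ∈ F₂, c.support.card
          ≤ (b.support.card - 1) + ∑ c ∈ F.erase b, c.support.card := by
        by_cases h : b₂ ∈ F.erase b
        · rw [hF₂, Finset.insert_eq_of_mem h]; omega
        · rw [hF₂, Finset.sum_insert h, hsupp2]
      -- the upper-set identity
      have hset : {a : Fin n →₀ ℕ | ∃ c ∈ (F : Set (Fin n →₀ ℕ)), c ≤ a}
          = {a | ∃ c ∈ (F₁ : Set (Fin n →₀ ℕ)), c ≤ a}
            ∩ {a | ∃ c ∈ (F₂ : Set (Fin n →₀ ℕ)), c ≤ a} := by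
        ext a
        constructor
        · rintro ⟨c, hc, hca⟩
          by_cases hcb : c = b
          · subst hcb
            constructor
            · refine ⟨b₁, Finset.mem_coe.mpr (Finset.mem_insert_self _ _), le_trans ?_ hca⟩
              exact Finsupp.single_le_iff.mpr le_rfl
            · refine ⟨b₂, Finset.mem_coe.mpr (Finset.mem_insert_self _ _), le_trans ?_ hca⟩
              rw [Finsupp.le_def]
              intro j
              by_cases hj : j = i
              · subst hj; rw [hb₂, Finsupp.erase_same]; exact Nat.zero_le _
              · rw [hb₂, Finsupp.erase_ne hj]
          · have hc' : c ∈ F.erase b := Finset.mem_erase.mpr ⟨hcb, Finset.mem_coe.mp hc⟩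
            exact ⟨⟨c, Finset.mem_coe.mpr (Finset.mem_insert_of_mem hc'), hca⟩,
              ⟨c, Finset.mem_coe.mpr (Finset.mem_insert_of_mem hc'), hca⟩⟩
        · rintro ⟨⟨c₁, hc₁, hca₁⟩, ⟨c₂, hc₂, hca₂⟩⟩
          rcases Finset.mem_insert.mp (Finset.mem_coe.mp hc₁) with h1 | h1
          · rcases Finset.mem_insert.mp (Finset.mem_coe.mp hc₂) with h2 | h2
            · subst h1; subst h2
              refine ⟨b, Finset.mem_coe.mpr hbF, ?_⟩
              rw [Finsupp.le_def]
              intro j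
              by_cases hj : j = i
              · have h' := Finsupp.le_def.mp hca₁ i
                rw [hb₁, Finsupp.single_eq_same] at h'
                rw [hj]
                exact h'
              · have := Finsupp.le_def.mp hca₂ j
                rwa [hb₂, Finsupp.erase_ne hj] at this
            · exact ⟨c₂, Finset.mem_coe.mpr (Finset.mem_of_mem_erase h2), hca₂⟩
          · exact ⟨c₁, Finset.mem_coe.mpr (Finset.mem_of_mem_erase h1), hca₁⟩
      have hid : mspan K (F : Set (Fin n →₀ ℕ))
          = mspan K (F₁ : Set (Fin n →₀ ℕ)) ⊓ mspan K (F₂ : Set (Fin n →₀ ℕ)) := by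
        apply monomial_ideal_ext (isMonomialIdeal_mspan _)
          (isMonomialIdeal_inf (isMonomialIdeal_mspan _) (isMonomialIdeal_mspan _))
        rw [expSet_inf, expSet_mspan, expSet_mspan, expSet_mspan]
        exact hset
      obtain ⟨𝒬₁, h𝒬₁, hI₁⟩ := ih F₁ (by omega)
      obtain ⟨𝒬₂, h𝒬₂, hI₂⟩ := ih F₂ (by omega)
      refine ⟨𝒬₁ ∪ 𝒬₂, ?_, ?_⟩
      · intro Q hQ
        rcases Finset.mem_union.mp hQ with h | h
        · exact h𝒬₁ Q h
        · exact h𝒬₂ Q h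
      · rw [Finset.iInf_union, ← hI₁, ← hI₂]
        exact hid
    · by_cases h0 : 0 ∈ F
      · refine ⟨∅, by simp, ?_⟩
        rw [show (⨅ Q ∈ (∅ : Finset (Ideal (MvPolynomial (Fin n) K))), Q) = ⊤ by simp]
        exact mspan_eq_top_of_zero_mem h0
      · have hcard : ∀ c ∈ F, c.support.card = 1 := by
          intro c hc
          have h1 : ¬ 2 ≤ c.support.card := fun h => hsplit ⟨c, hc, h⟩
          have h2 : c.support.card ≠ 0 := by
            intro h
            apply h0
            have hc0 : c = 0 := Finsupp.support_eq_empty.mp (Finset.card_eq_zero.mp h)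
            rwa [← hc0]
          omega
        set Si : Fin n → Finset ℕ :=
          fun i => (F.filter (fun c => c i ≠ 0)).image (fun c => c i) with hSi
        set T : Finset (Fin n) := Finset.univ.filter (fun i => (Si i).Nonempty) with hT
        set e : Fin n → ℕ := fun i => if h : (Si i).Nonempty then (Si i).min' h else 1 with he
        have hTmem : ∀ i ∈ T, (Si i).Nonempty := fun i hiT => (Finset.mem_filter.mp hiT).2
        have heMin : ∀ (i : Fin n) (h : (Si i).Nonempty), e i = (Si i).min' h := by
          intro i h; rw [he]; simp only [dif_pos h]
        have hSiNe : ∀ (i : Fin n) (x : ℕ), x ∈ Si i → x ≠ 0 := by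
          intro i x hx
          obtain ⟨c, hc, hci⟩ := Finset.mem_image.mp hx
          have := (Finset.mem_filter.mp hc).2
          omega
        refine ⟨{mspan K ((fun i => Finsupp.single i (e i)) '' (T : Set (Fin n)))}, ?_, ?_⟩
        · intro Q hQ
          rw [Finset.mem_singleton] at hQ
          subst hQ
          rw [isIrreducible_iff]
          refine ⟨T, e, ?_, rfl⟩
          intro i hiT
          have hne := hTmem i hiT
          have : e i ∈ Si i := by rw [heMin i hne]; exact Finset.min'_mem _ _
          have := hSiNe i _ this
          omega
        · rw [Finset.iInf_singleton]
          apply monomial_ideal_ext (isMonomialIdeal_mspan _) (isMonomialIdeal_mspan _)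
          rw [expSet_mspan, expSet_irr]
          ext a
          simp only [Set.mem_setOf_eq]
          constructor
          · rintro ⟨c, hc, hca⟩
            have hcF : c ∈ F := Finset.mem_coe.mp hc
            obtain ⟨j, hj⟩ := Finset.card_eq_one.mp (hcard c hcF)
            have hcj : c j ≠ 0 := by
              rw [← Finsupp.mem_support_iff, hj]; exact Finset.mem_singleton_self j
            have hSij : c j ∈ Si j :=
              Finset.mem_image.mpr ⟨c, Finset.mem_filter.mpr ⟨hcF, hcj⟩, rfl⟩
            have hne : (Si j).Nonempty := ⟨_, hSij⟩
            refine ⟨j, Finset.mem_filter.mpr ⟨Finset.mem_univ _, hne⟩, ?_⟩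
            have hej : e j ≤ c j := by rw [heMin j hne]; exact Finset.min'_le _ _ hSij
            exact hej.trans (Finsupp.le_def.mp hca j)
          · rintro ⟨i, hiT, hia⟩
            have hne := hTmem i hiT
            have hmin : e i ∈ Si i := by rw [heMin i hne]; exact Finset.min'_mem _ _
            obtain ⟨c, hcmem, hci⟩ := Finset.mem_image.mp hmin
            obtain ⟨hcF, hci0⟩ := Finset.mem_filter.mp hcmem
            refine ⟨c, Finset.mem_coe.mpr hcF, ?_⟩
            rw [Finsupp.le_def]
            intro j
            by_cases hj : j = i
            · subst hj; rw [hci]; exact hia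
            · have hjc : j ∉ c.support := by
                obtain ⟨j', hj'⟩ := Finset.card_eq_one.mp (hcard c hcF)
                have hic : i ∈ c.support := Finsupp.mem_support_iff.mpr hci0
                rw [hj'] at hic ⊢
                rw [Finset.mem_singleton] at hic
                rw [Finset.mem_singleton]
                rw [← hic]
                exact hj
              have : c j = 0 := Finsupp.notMem_support_iff.mp hjc
              rw [this]
              exact Nat.zero_le _

lemma prune :
    ∀ (N : ℕ) (𝒬 : Finset (Ideal (MvPolynomial (Fin n) K))), 𝒬.card < N →
    (∀ Q ∈ 𝒬, IsIrreducibleMonomialIdeal Q) →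
    ∃ 𝒬' : Finset (Ideal (MvPolynomial (Fin n) K)),
      (∀ Q ∈ 𝒬', IsIrreducibleMonomialIdeal Q) ∧ (⨅ Q ∈ 𝒬', Q) = (⨅ Q ∈ 𝒬, Q) ∧
      ∀ Q ∈ 𝒬', (⨅ R ∈ 𝒬'.erase Q, R) ≠ ⨅ Q' ∈ 𝒬', Q' := by
  classical
  intro N
  induction N with
  | zero => exact fun 𝒬 h => absurd h (Nat.not_lt_zero _)
  | succ N ih =>
    intro 𝒬 hcard hirr
    by_cases hred : ∃ Q ∈ 𝒬, (⨅ R ∈ 𝒬.erase Q, R) = ⨅ Q' ∈ 𝒬, Q'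
    · obtain ⟨Q, hQ, hQeq⟩ := hred
      have hc1 : 0 < 𝒬.card := Finset.card_pos.mpr ⟨Q, hQ⟩
      have hc2 := Finset.card_erase_of_mem hQ
      obtain ⟨𝒬', h1, h2, h3⟩ := ih (𝒬.erase Q) (by omega)
        (fun R hR => hirr R (Finset.mem_of_mem_erase hR))
      exact ⟨𝒬', h1, h2.trans hQeq, h3⟩
    · push_neg at hred
      exact ⟨𝒬, hirr, rfl, hred⟩

lemma mem_eq_of_le {𝒬 : Finset (Ideal (MvPolynomial (Fin n) K))}
    (hirr : ∀ Q ∈ 𝒬, (⨅ R ∈ 𝒬.erase Q, R) ≠ ⨅ Q' ∈ 𝒬, Q')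
    {Q Q' : Ideal (MvPolynomial (Fin n) K)}
    (hQ : Q ∈ 𝒬) (hQ' : Q' ∈ 𝒬) (hle : Q' ≤ Q) : Q = Q' := by
  classical
  by_contra hne
  apply hirr Q hQ
  have hins : (⨅ Q' ∈ 𝒬, Q') = Q ⊓ ⨅ R ∈ 𝒬.erase Q, R := by
    conv_lhs => rw [← Finset.insert_erase hQ]
    rw [Finset.iInf_insert]
  apply le_antisymm
  · rw [hins]
    refine le_inf ?_ le_rfl
    exact le_trans (iInf₂_le Q' (Finset.mem_erase.mpr ⟨fun h => hne h.symm, hQ'⟩)) hle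
  · exact le_iInf₂ fun R hR => iInf₂_le R (Finset.mem_of_mem_erase hR)

lemma decomp_subset {I : Ideal (MvPolynomial (Fin n) K)}
    {𝒬₁ 𝒬₂ : Finset (Ideal (MvPolynomial (Fin n) K))}
    (h1irr : ∀ Q ∈ 𝒬₁, IsIrreducibleMonomialIdeal Q) (h1eq : I = ⨅ Q ∈ 𝒬₁, Q)
    (h1min : ∀ Q ∈ 𝒬₁, (⨅ R ∈ 𝒬₁.erase Q, R) ≠ I)
    (h2irr : ∀ Q ∈ 𝒬₂, IsIrreducibleMonomialIdeal Q) (h2eq : I = ⨅ Q ∈ 𝒬₂, Q) :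
    𝒬₁ ⊆ 𝒬₂ := by
  intro Q hQ
  have hQle : I ≤ Q := h1eq ▸ iInf₂_le Q hQ
  obtain ⟨Q', hQ', hQ'le⟩ := irr_biInf_le (h1irr Q hQ) 𝒬₂
    (fun R hR => irr_isMonomialIdeal (h2irr R hR)) (by rw [← h2eq]; exact hQle)
  have hQ'ge : I ≤ Q' := h2eq ▸ iInf₂_le Q' hQ'
  obtain ⟨Q'', hQ'', hQ''le⟩ := irr_biInf_le (h2irr Q' hQ') 𝒬₁
    (fun R hR => irr_isMonomialIdeal (h1irr R hR)) (by rw [← h1eq]; exact hQ'ge)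
  have h1min' : ∀ R ∈ 𝒬₁, (⨅ S ∈ 𝒬₁.erase R, S) ≠ ⨅ Q' ∈ 𝒬₁, Q' := by
    intro R hR
    rw [← h1eq]
    exact h1min R hR
  have hQQ'' : Q = Q'' := mem_eq_of_le h1min' hQ hQ'' (hQ''le.trans hQ'le)
  have : Q = Q' := le_antisymm (hQQ'' ▸ hQ''le) hQ'le
  rwa [this]

lemma biInf_coe_diff (𝒬 : Finset (Ideal (MvPolynomial (Fin n) K)))
    (Q : Ideal (MvPolynomial (Fin n) K)) :
    (⨅ R ∈ ((𝒬 : Set (Ideal (MvPolynomial (Fin n) K))) \ {Q}), R)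
      = ⨅ R ∈ 𝒬.erase Q, R := by
  classical
  rw [← Finset.coe_erase]
  exact Finset.iInf_coe _ _

end MonomialDecompAux

/-- Every monomial ideal has a unique irredundant decomposition as a
finite intersection of irreducible monomial ideals. -/
theorem unique_irreducible_decomposition {n : ℕ} {K : Type*} [Field K]
    (I : Ideal (MvPolynomial (Fin n) K)) (hI : IsMonomialIdeal I) :
    ∃! 𝒬 : Finset (Ideal (MvPolynomial (Fin n) K)),
      (∀ Q ∈ 𝒬, IsIrreducibleMonomialIdeal Q) ∧
      (I = ⨅ Q ∈ 𝒬, Q) ∧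
      ∀ Q ∈ 𝒬, (⨅ R ∈ ((𝒬 : Set (Ideal (MvPolynomial (Fin n) K))) \ {Q}), R) ≠ I := by
  classical
  open MonomialDecompAux in
  obtain ⟨B, hB⟩ := hI
  obtain ⟨F, hF⟩ := exists_finset_mspan (K := K) B
  have hIF : I = mspan K (F : Set (Fin n →₀ ℕ)) := by
    rw [hB]; exact hF.symm
  obtain ⟨𝒬₀, h𝒬₀irr, h𝒬₀eq⟩ :=
    exists_decomp (K := K) (∑ b ∈ F, b.support.card + 1) F (by omega)
  obtain ⟨𝒬, hirr, heq, hmin⟩ := prune (K := K) (𝒬₀.card + 1) 𝒬₀ (by omega) h𝒬₀irr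
  have hIeq : I = ⨅ Q ∈ 𝒬, Q := by rw [hIF, h𝒬₀eq, ← heq]
  have hminI : ∀ Q ∈ 𝒬, (⨅ R ∈ 𝒬.erase Q, R) ≠ I := by
    intro Q hQ
    rw [hIeq]
    exact hmin Q hQ
  refine ⟨𝒬, ⟨hirr, hIeq, ?_⟩, ?_⟩
  · intro Q hQ
    rw [biInf_coe_diff]
    exact hminI Q hQ
  · rintro 𝒬' ⟨h1irr, h1eq, h1min⟩
    have h1min' : ∀ Q ∈ 𝒬', (⨅ R ∈ 𝒬'.erase Q, R) ≠ I := by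
      intro Q hQ
      rw [← biInf_coe_diff]
      exact h1min Q hQ
    apply Finset.Subset.antisymm
    · exact decomp_subset h1irr h1eq h1min' hirr hIeq
    · exact decomp_subset hirr hIeq hminI h1irr h1eq
end

section
/- Let G be a simple hypergraph on V = {x_1, ..., x_n} all of whose edges have cardinality at least 2, with edge ideal I = I(G) ⊆ S = K[x_1, ..., x_n], and let k ≥ 1. Let Y_i = {y_{i,1}, ..., y_{i,n}} for i = 1, ..., k be disjoint copies of the variables, let I(Y_i) be the edge ideal of G written in the variables Y_i, set Ĩ = I(Y_1) + ... + I(Y_k) ⊆ T_k = K[Y_1, ..., Y_k], and let φ_k : S → T_k be the K-algebra homomorphism sending x_j to y_{1,j} + ... + y_{k,j}. Then G is k-colorable if and only if φ_k(x_1 x_2 ⋯ x_n) ∉ Ĩ. -/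
open MvPolynomial

/-- A simple hypergraph on vertex set `Fin n`: a set of nonempty edges,
no edge containing another. -/
structure SimpleHypergraph (n : ℕ) where
  edges : Finset (Finset (Fin n))
  nonempty_of_mem : ∀ e ∈ edges, e.Nonempty
  simple : ∀ e ∈ edges, ∀ f ∈ edges, e ⊆ f → e = f

/-- `G` is `k`-colorable: there is an assignment of `k` colors to the vertices such that
every edge (of cardinality at least two) contains two vertices of different colors. -/
def Colorable {n : ℕ} (G : SimpleHypergraph n) (k : ℕ) : Prop :=
  ∃ c : Fin n → Fin k, ∀ e ∈ G.edges, 2 ≤ e.card → ∃ u ∈ e, ∃ v ∈ e, c u ≠ c v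

/-- The ideal `Ĩ = I(Y_1) + ⋯ + I(Y_k)` in `T_k = K[Y_1, …, Y_k]`, where `I(Y_i)` is the
edge ideal of `G` written in the `i`-th copy `Y_i` of the variables.  Here the variable
`y_{i,j}` is encoded as `X (i, j)`. -/
noncomputable def coloredEdgeIdeal {n : ℕ} (K : Type*) [Field K] (G : SimpleHypergraph n)
    (k : ℕ) : Ideal (MvPolynomial (Fin k × Fin n) K) :=
  Ideal.span {m | ∃ i : Fin k, ∃ e ∈ G.edges, m = ∏ j ∈ e, X (i, j)}

/-- The homomorphism `φ_k : S → T_k` sending `x_j` to `y_{1,j} + ⋯ + y_{k,j}`. -/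
noncomputable def phi {n : ℕ} (K : Type*) [Field K] (k : ℕ) :
    MvPolynomial (Fin n) K →ₐ[K] MvPolynomial (Fin k × Fin n) K :=
  aeval fun j : Fin n => ∑ i : Fin k, X (i, j)

/-- Exponent vector of the monomial attached to a coloring `c`. -/
noncomputable def dvec {n k : ℕ} (c : Fin n → Fin k) : (Fin k × Fin n) →₀ ℕ :=
  ∑ j : Fin n, Finsupp.single (c j, j) 1

/-- Exponent vector of the generator attached to color `i` and edge `e`. -/
noncomputable def svec {n k : ℕ} (i : Fin k) (e : Finset (Fin n)) : (Fin k × Fin n) →₀ ℕ :=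
  ∑ j ∈ e, Finsupp.single (i, j) 1

lemma dvec_apply {n k : ℕ} (c : Fin n → Fin k) (i : Fin k) (j : Fin n) :
    dvec c (i, j) = if c j = i then 1 else 0 := by
  classical
  rw [dvec, Finsupp.finset_sum_apply]
  rw [Finset.sum_eq_single j]
  · simp [Finsupp.single_apply, Prod.ext_iff]
  · intro b _ hb
    simp [Finsupp.single_apply, Prod.ext_iff, hb]
  · simp

lemma svec_apply {n k : ℕ} (i : Fin k) (e : Finset (Fin n)) (i' : Fin k) (j : Fin n) :
    svec i e (i', j) = if i' = i ∧ j ∈ e then 1 else 0 := by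
  classical
  rw [svec, Finsupp.finset_sum_apply]
  by_cases hj : j ∈ e
  · rw [Finset.sum_eq_single_of_mem j hj]
    · simp [Finsupp.single_apply, Prod.ext_iff, hj, eq_comm]
    · intro b _ hb
      simp only [Finsupp.single_apply, Prod.ext_iff, ite_eq_right_iff, one_ne_zero]
      exact fun h => absurd h.2 hb
  · rw [Finset.sum_eq_zero, if_neg (by tauto)]
    intro b hb
    simp [Finsupp.single_apply, Prod.ext_iff]
    rintro rfl rfl
    exact hj hb

lemma dvec_injective {n k : ℕ} : Function.Injective (dvec (n := n) (k := k)) := by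
  intro c c' h
  funext j
  have h1 := dvec_apply c (c j) j
  rw [h] at h1
  rw [dvec_apply] at h1
  simp at h1
  exact h1.symm

lemma svec_le_dvec_iff {n k : ℕ} (i : Fin k) (e : Finset (Fin n)) (c : Fin n → Fin k) :
    svec i e ≤ dvec c ↔ ∀ j ∈ e, c j = i := by
  constructor
  · intro h j hj
    have := h (i, j)
    rw [svec_apply, dvec_apply, if_pos ⟨rfl, hj⟩] at this
    by_contra hne
    rw [if_neg hne] at this
    omega
  · intro h
    intro a
    obtain ⟨i', j⟩ := a
    rw [svec_apply, dvec_apply]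
    by_cases h1 : i' = i ∧ j ∈ e
    · rw [if_pos h1, if_pos (by rw [h j h1.2, h1.1])]
    · rw [if_neg h1]
      positivity

lemma prod_X_edge {n k : ℕ} {K : Type*} [Field K] (i : Fin k) (e : Finset (Fin n)) :
    (monomial (svec i e) (1 : K) : MvPolynomial (Fin k × Fin n) K) = ∏ j ∈ e, X (i, j) := by
  rw [svec, monomial_sum_one]
  simp [X]

/-- Let `G` be a simple hypergraph all of whose edges have cardinality
at least `2`, and let `k ≥ 1`.  Then `G` is `k`-colorable if and only if
`φ_k(x_1 ⋯ x_n) ∉ Ĩ`. -/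
theorem colorable_iff_phi_not_mem {n : ℕ} (K : Type*) [Field K] (G : SimpleHypergraph n)
    (hcard : ∀ e ∈ G.edges, 2 ≤ e.card) (k : ℕ) (hk : 1 ≤ k) :
    Colorable G k ↔ phi K k (∏ j : Fin n, (X j : MvPolynomial (Fin n) K)) ∉
      coloredEdgeIdeal K G k := by
  classical
  -- rewrite the image polynomial
  have hphi : phi K k (∏ j : Fin n, (X j : MvPolynomial (Fin n) K)) =
      ∑ c : Fin n → Fin k, monomial (dvec c) (1 : K) := by
    rw [map_prod]
    simp only [phi, aeval_X]
    rw [Finset.prod_univ_sum]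
    rw [Fintype.piFinset_univ]
    refine Finset.sum_congr rfl fun c _ => ?_
    rw [dvec, monomial_sum_one]
    simp [X]
  set p : MvPolynomial (Fin k × Fin n) K := ∑ c : Fin n → Fin k, monomial (dvec c) (1 : K)
    with hp
  -- coefficients of p
  have hcoeff : ∀ m, p.coeff m = if ∃ c, dvec c = m then 1 else 0 := by
    intro m
    rw [hp, coeff_sum]
    by_cases hm : ∃ c, dvec c = m
    · obtain ⟨c, rfl⟩ := hm
      rw [Finset.sum_eq_single_of_mem c (Finset.mem_univ c)]
      · simp
      · intro b _ hb
        rw [coeff_monomial, if_neg (fun h => hb (dvec_injective h))]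
    · rw [if_neg hm, Finset.sum_eq_zero]
      intro c _
      rw [coeff_monomial, if_neg (fun h => hm ⟨c, h⟩)]
  -- rewrite the ideal as a monomial ideal
  have hideal : coloredEdgeIdeal K G k =
      Ideal.span ((fun s => monomial s (1 : K)) ''
        {s | ∃ i : Fin k, ∃ e ∈ G.edges, s = svec i e}) := by
    rw [coloredEdgeIdeal]
    congr 1
    ext m
    constructor
    · rintro ⟨i, e, he, rfl⟩
      exact ⟨svec i e, ⟨i, e, he, rfl⟩, prod_X_edge i e⟩
    · rintro ⟨s, ⟨i, e, he, rfl⟩, rfl⟩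
      exact ⟨i, e, he, prod_X_edge i e⟩
  rw [hphi, hideal, mem_ideal_span_monomial_image]
  constructor
  · -- colorable → not in ideal
    rintro ⟨c, hc⟩ hmem
    have hsupp : dvec c ∈ p.support := by
      rw [mem_support_iff, hcoeff, if_pos ⟨c, rfl⟩]
      exact one_ne_zero
    obtain ⟨s, ⟨i, e, he, rfl⟩, hle⟩ := hmem _ hsupp
    rw [svec_le_dvec_iff] at hle
    obtain ⟨u, hu, v, hv, huv⟩ := hc e he (hcard e he)
    exact huv ((hle u hu).trans (hle v hv).symm)
  · -- not in ideal → colorable: contrapositive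
    intro hnot
    by_contra hcol
    apply hnot
    intro m hm
    rw [mem_support_iff, hcoeff] at hm
    have hex : ∃ c, dvec c = m := by
      by_contra h
      rw [if_neg h] at hm
      exact hm rfl
    obtain ⟨c, rfl⟩ := hex
    rw [Colorable] at hcol
    push_neg at hcol
    obtain ⟨e, he, h2, hmono⟩ := hcol c
    obtain ⟨v, hv⟩ := G.nonempty_of_mem e he
    refine ⟨svec (c v) e, ⟨c v, e, he, rfl⟩, ?_⟩
    rw [svec_le_dvec_iff]
    intro j hj
    exact hmono j hj v hv
end

section
/- Let G be a simple hypergraph on V = {x_1, ..., x_n} all of whose edges have cardinality at least 2, with edge ideal I(G) ⊆ S = K[x_1, ..., x_n], and let m = x_1 x_2 ⋯ x_n. Then for every k ≥ 1, G is k-colorable if and only if m ∉ I(G)^{k}, the k-th secant power of I(G). In particular, the chromatic number satisfies χ(G) = min{ k : m ∉ I(G)^{k} }. -/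
open MvPolynomial

/-- The edge ideal of `G`. -/
noncomputable def edgeIdeal {n : ℕ} (K : Type*) [Field K] (G : SimpleHypergraph n) :
    Ideal (MvPolynomial (Fin n) K) :=
  Ideal.span {m | ∃ e ∈ G.edges, m = ∏ i ∈ e, X i}

/-- The `k`-th secant power `I^{k}` of an ideal `I ⊆ S = K[x_1, …, x_n]`:
working in `T = K[V, Y_1, …, Y_k]` (with `y_{i,j}` encoded as `X (Sum.inr (i, j))` and
`x_j` as `X (Sum.inl j)`), it is the contraction to `S` of
`I(Y_1) + ⋯ + I(Y_k) + ({x_j − (y_{1,j} + ⋯ + y_{k,j})})`. -/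
noncomputable def secantPower {n : ℕ} {K : Type*} [Field K]
    (I : Ideal (MvPolynomial (Fin n) K)) (k : ℕ) : Ideal (MvPolynomial (Fin n) K) :=
  Ideal.comap (rename (Sum.inl : Fin n → Fin n ⊕ (Fin k × Fin n)))
    ((⨆ i : Fin k, Ideal.map (rename fun j : Fin n => (Sum.inr (i, j) : Fin n ⊕ (Fin k × Fin n))) I)
      ⊔ Ideal.span {p | ∃ j : Fin n,
          p = X (Sum.inl j) - ∑ i : Fin k, X (Sum.inr (i, j) : Fin n ⊕ (Fin k × Fin n))})

private lemma prod_sub_prod_mem' {α R : Type*} [CommRing R] (P : Ideal R)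
    (s : Finset α) (a b : α → R) (h : ∀ j ∈ s, a j - b j ∈ P) :
    (∏ j ∈ s, a j) - ∏ j ∈ s, b j ∈ P := by
  classical
  induction s using Finset.induction_on with
  | empty => simpa using P.zero_mem
  | insert x s' hj ih =>
    rw [Finset.prod_insert hj, Finset.prod_insert hj]
    have key : a x * ∏ j ∈ s', a j - b x * ∏ j ∈ s', b j
        = a x * ((∏ j ∈ s', a j) - ∏ j ∈ s', b j) + (a x - b x) * ∏ j ∈ s', b j := by ring
    rw [key]
    exact P.add_mem (P.mul_mem_left _ (ih fun j hjs => h j (Finset.mem_insert_of_mem hjs)))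
      (P.mul_mem_right _ (h x (Finset.mem_insert_self _ _)))

private lemma mem_secant_of_not_colorable {n k : ℕ} (K : Type*) [Field K]
    (G : SimpleHypergraph n) (h : ¬ Colorable G k) :
    (∏ j : Fin n, (X j : MvPolynomial (Fin n) K)) ∈ secantPower (edgeIdeal K G) k := by
  classical
  rw [secantPower, Ideal.mem_comap]
  set J := (⨆ i : Fin k, Ideal.map
        (rename fun j : Fin n => (Sum.inr (i, j) : Fin n ⊕ (Fin k × Fin n)))
        (edgeIdeal K G))
      ⊔ Ideal.span {p | ∃ j : Fin n,
          p = X (Sum.inl j) - ∑ i : Fin k,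
            (X (Sum.inr (i, j) : Fin n ⊕ (Fin k × Fin n)) : MvPolynomial _ K)} with hJdef
  unfold Colorable at h
  push_neg at h
  have h2 : (∏ j : Fin n, ∑ i : Fin k,
      (X (Sum.inr (i, j) : Fin n ⊕ (Fin k × Fin n)) : MvPolynomial _ K)) ∈ J := by
    rw [Finset.prod_univ_sum]
    refine Ideal.sum_mem _ fun c _ => ?_
    obtain ⟨e, he, hecard, hconst⟩ := h c
    obtain ⟨u0, hu0⟩ := G.nonempty_of_mem e he
    have hfac : (∏ j ∈ e, (X (Sum.inr (c j, j) : Fin n ⊕ (Fin k × Fin n)) : MvPolynomial _ K))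
        = rename (fun j : Fin n => (Sum.inr (c u0, j) : Fin n ⊕ (Fin k × Fin n)))
            (∏ j ∈ e, X j) := by
      rw [map_prod]
      exact Finset.prod_congr rfl fun j hj => by rw [rename_X, hconst j hj u0 hu0]
    have hmem1 : (∏ j ∈ e, (X (Sum.inr (c j, j) : Fin n ⊕ (Fin k × Fin n)) : MvPolynomial _ K))
        ∈ J := by
      rw [hfac]
      refine Ideal.mem_sup_left ?_
      refine (le_iSup (fun i : Fin k => Ideal.map
        (rename fun j : Fin n => (Sum.inr (i, j) : Fin n ⊕ (Fin k × Fin n)))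
        (edgeIdeal K G)) (c u0)) ?_
      exact Ideal.mem_map_of_mem _ (Ideal.subset_span ⟨e, he, rfl⟩)
    rw [← Finset.prod_mul_prod_compl e
      (fun j : Fin n => (X (Sum.inr (c j, j) : Fin n ⊕ (Fin k × Fin n)) : MvPolynomial _ K))]
    exact Ideal.mul_mem_right _ _ hmem1
  have h1 : (∏ j : Fin n, (X (Sum.inl j) : MvPolynomial (Fin n ⊕ (Fin k × Fin n)) K))
      - ∏ j : Fin n, ∑ i : Fin k, (X (Sum.inr (i, j)) : MvPolynomial _ K) ∈ J := by
    refine Ideal.mem_sup_right (prod_sub_prod_mem' _ _ _ _ fun j _ => ?_)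
    exact Ideal.subset_span ⟨j, rfl⟩
  have := J.add_mem h1 h2
  rw [sub_add_cancel] at this
  simpa [map_prod] using this

private lemma not_mem_secant_of_colorable {n k : ℕ} (K : Type*) [Field K]
    (G : SimpleHypergraph n) (hcard : ∀ e ∈ G.edges, 2 ≤ e.card) (h : Colorable G k) :
    (∏ j : Fin n, (X j : MvPolynomial (Fin n) K)) ∉ secantPower (edgeIdeal K G) k := by
  classical
  obtain ⟨c, hc⟩ := h
  set f : Fin n ⊕ (Fin k × Fin n) → MvPolynomial (Fin n) K :=
    Sum.elim X (fun p => if c p.2 = p.1 then X p.2 else 0) with hf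
  intro hmem
  rw [secantPower, Ideal.mem_comap] at hmem
  have hker : (⨆ i : Fin k, Ideal.map
        (rename fun j : Fin n => (Sum.inr (i, j) : Fin n ⊕ (Fin k × Fin n)))
        (edgeIdeal K G))
      ⊔ Ideal.span {p | ∃ j : Fin n,
          p = X (Sum.inl j) - ∑ i : Fin k,
            (X (Sum.inr (i, j) : Fin n ⊕ (Fin k × Fin n)) : MvPolynomial _ K)}
      ≤ RingHom.ker (aeval f : MvPolynomial (Fin n ⊕ (Fin k × Fin n)) K →ₐ[K]
          MvPolynomial (Fin n) K) := by
    refine sup_le (iSup_le fun i => ?_) ?_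
    · rw [Ideal.map_le_iff_le_comap, edgeIdeal, Ideal.span_le]
      rintro p ⟨e, he, rfl⟩
      rw [SetLike.mem_coe, Ideal.mem_comap, RingHom.mem_ker]
      obtain ⟨u, hu, v, hv, huv⟩ := hc e he (hcard e he)
      have : ∃ w ∈ e, c w ≠ i := by
        by_cases h : c u = i
        · exact ⟨v, hv, fun hvi => huv (h.trans hvi.symm)⟩
        · exact ⟨u, hu, h⟩
      obtain ⟨w, hw, hwne⟩ := this
      rw [aeval_rename]
      rw [map_prod]
      refine Finset.prod_eq_zero hw ?_
      simp [hf, hwne]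
    · rw [Ideal.span_le]
      rintro p ⟨j, rfl⟩
      rw [SetLike.mem_coe, RingHom.mem_ker]
      simp [hf, Finset.sum_ite_eq]
  have := hker hmem
  rw [RingHom.mem_ker, aeval_rename] at this
  have heq : (∏ j : Fin n, (X j : MvPolynomial (Fin n) K)) = 0 := by
    simpa [hf] using this
  exact (Finset.prod_ne_zero_iff.mpr fun j _ => X_ne_zero j) heq

/-- Let `G` be a simple hypergraph (`n ≥ 1`) all of whose edges have
cardinality at least `2`, with edge ideal `I(G)`, and let `m = x_1 ⋯ x_n`.  For every
`k ≥ 1`, `G` is `k`-colorable iff `m ∉ I(G)^{k}`; in particular the chromatic number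
`χ(G) = min {k : G is k-colorable}` equals `min {k : m ∉ I(G)^{k}}`. -/
theorem colorable_iff_not_mem_secant {n : ℕ} (K : Type*) [Field K] (hn : 1 ≤ n)
    (G : SimpleHypergraph n) (hcard : ∀ e ∈ G.edges, 2 ≤ e.card) :
    (∀ k : ℕ, 1 ≤ k →
      (Colorable G k ↔
        (∏ j : Fin n, (X j : MvPolynomial (Fin n) K)) ∉ secantPower (edgeIdeal K G) k)) ∧
    sInf {k : ℕ | Colorable G k} =
      sInf {k : ℕ | (∏ j : Fin n, (X j : MvPolynomial (Fin n) K)) ∉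
        secantPower (edgeIdeal K G) k} := by
  have key : ∀ k : ℕ, Colorable G k ↔
      (∏ j : Fin n, (X j : MvPolynomial (Fin n) K)) ∉ secantPower (edgeIdeal K G) k := by
    intro k
    constructor
    · exact fun h => not_mem_secant_of_colorable K G hcard h
    · intro h
      by_contra hcol
      exact h (mem_secant_of_not_colorable K G hcol)
  refine ⟨fun k _ => key k, ?_⟩
  congr 1
  ext k
  simpa [Set.mem_setOf_eq] using key k
end

section
/- Let G be a simple hypergraph on V = {x_1, ..., x_n} all of whose edges have cardinality at least 2, with cover ideal J(G) ⊆ S = K[x_1, ..., x_n], and let m = x_1 x_2 ⋯ x_n. Then for every k ≥ 1, G is k-colorable if and only if m^{k−1} ∈ J(G)^k. In particular, the chromatic number satisfies χ(G) = min{ k : m^{k−1} ∈ J(G)^k }. -/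
open MvPolynomial

/-- `w` is a vertex cover of `G`: it meets every edge. -/
def IsCover {n : ℕ} (G : SimpleHypergraph n) (w : Finset (Fin n)) : Prop :=
  ∀ e ∈ G.edges, (w ∩ e).Nonempty

/-- The cover ideal of `G`, generated by the squarefree monomials corresponding to
vertex covers. -/
noncomputable def coverIdeal {n : ℕ} (K : Type*) [Field K] (G : SimpleHypergraph n) :
    Ideal (MvPolynomial (Fin n) K) :=
  Ideal.span {m | ∃ w : Finset (Fin n), IsCover G w ∧ m = ∏ i ∈ w, X i}

namespace ColorAux

variable {n : ℕ}

/-- The exponent vector of the squarefree monomial attached to `w`. -/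
noncomputable def coverExp (w : Finset (Fin n)) : Fin n →₀ ℕ :=
  ∑ j ∈ w, Finsupp.single j 1

lemma coverExp_apply (w : Finset (Fin n)) (j : Fin n) :
    coverExp w j = if j ∈ w then 1 else 0 := by
  classical
  simp [coverExp, Finset.sum_apply', Finsupp.single_apply, Finset.sum_ite_eq]

lemma monomial_coverExp (K : Type*) [Field K] (w : Finset (Fin n)) :
    (monomial (coverExp w) (1 : K)) = ∏ j ∈ w, X j := by
  rw [coverExp, monomial_sum_one]
  rfl

/-- Exponent vectors that are sums of `k` cover exponents. -/
def ExpSet (G : SimpleHypergraph n) (k : ℕ) : Set (Fin n →₀ ℕ) :=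
  {d | ∃ W : Fin k → Finset (Fin n), (∀ i, IsCover G (W i)) ∧ d = ∑ i, coverExp (W i)}

lemma coverIdeal_le (K : Type*) [Field K] (G : SimpleHypergraph n) :
    coverIdeal K G ≤ Ideal.span ((fun d => monomial d (1 : K)) '' ExpSet G 1) := by
  rw [coverIdeal, Ideal.span_le]
  rintro m ⟨w, hw, rfl⟩
  apply Ideal.subset_span
  refine ⟨coverExp w, ⟨fun _ => w, fun _ => hw, ?_⟩, monomial_coverExp K w⟩
  simp [Fin.sum_univ_one]

lemma coverIdeal_pow_le (K : Type*) [Field K] (G : SimpleHypergraph n) (k : ℕ) :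
    coverIdeal K G ^ k ≤ Ideal.span ((fun d => monomial d (1 : K)) '' ExpSet G k) := by
  induction k with
  | zero =>
      intro x _
      have h1 : (1 : MvPolynomial (Fin n) K) ∈
          Ideal.span ((fun d => monomial d (1 : K)) '' ExpSet G 0) := by
        apply Ideal.subset_span
        exact ⟨0, ⟨Fin.elim0, fun i => i.elim0, by simp⟩, by simp⟩
      have : Ideal.span ((fun d => monomial d (1 : K)) '' ExpSet G 0) = ⊤ :=
        Ideal.eq_top_of_isUnit_mem _ h1 isUnit_one
      rw [this]; trivial
  | succ k ih =>
      rw [pow_succ]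
      calc coverIdeal K G ^ k * coverIdeal K G
          ≤ Ideal.span ((fun d => monomial d (1 : K)) '' ExpSet G k) *
            Ideal.span ((fun d => monomial d (1 : K)) '' ExpSet G 1) :=
            Ideal.mul_mono ih (coverIdeal_le K G)
        _ ≤ Ideal.span ((fun d => monomial d (1 : K)) '' ExpSet G (k + 1)) := by
            rw [Ideal.span_mul_span']
            rw [Ideal.span_le]
            rintro x hx
            rw [Set.mem_mul] at hx
            obtain ⟨a, ⟨d, ⟨W, hW, rfl⟩, rfl⟩, b, ⟨d', ⟨W', hW', rfl⟩, rfl⟩, rfl⟩ := hx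
            apply Ideal.subset_span
            refine ⟨(∑ i, coverExp (W i)) + ∑ i, coverExp (W' i),
              ⟨Fin.snoc W (W' 0), fun i => ?_, ?_⟩, by rw [monomial_mul, mul_one]⟩
            · refine Fin.lastCases ?_ (fun i => ?_) i
              · simpa using hW' 0
              · simpa using hW i
            · simp [Fin.sum_univ_castSucc]

end ColorAux

open ColorAux in
/-- Let `G` be a simple hypergraph (`n ≥ 1`) all of whose edges have
cardinality at least `2`, with cover ideal `J(G)`, and let `m = x_1 ⋯ x_n`.  For every
`k ≥ 1`, `G` is `k`-colorable iff `m^{k-1} ∈ J(G)^k`; in particular the chromatic number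
`χ(G) = min {k : G is k-colorable}` equals `min {k ≥ 1 : m^{k-1} ∈ J(G)^k}`. -/
theorem colorable_iff_pow_mem_coverIdeal_pow {n : ℕ} (K : Type*) [Field K] (hn : 1 ≤ n)
    (G : SimpleHypergraph n) (hcard : ∀ e ∈ G.edges, 2 ≤ e.card) :
    (∀ k : ℕ, 1 ≤ k →
      (Colorable G k ↔
        (∏ j : Fin n, (X j : MvPolynomial (Fin n) K)) ^ (k - 1) ∈ coverIdeal K G ^ k)) ∧
    sInf {k : ℕ | Colorable G k} =
      sInf {k : ℕ | 1 ≤ k ∧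
        (∏ j : Fin n, (X j : MvPolynomial (Fin n) K)) ^ (k - 1) ∈ coverIdeal K G ^ k} := by
  classical
  have hm : (∏ j : Fin n, (X j : MvPolynomial (Fin n) K)) =
      monomial (coverExp (Finset.univ : Finset (Fin n))) 1 :=
    (monomial_coverExp K Finset.univ).symm
  have hmpow : ∀ k : ℕ, (∏ j : Fin n, (X j : MvPolynomial (Fin n) K)) ^ (k - 1) =
      monomial ((k - 1) • coverExp (Finset.univ : Finset (Fin n))) 1 := by
    intro k
    rw [hm, monomial_pow, one_pow]
  have main : ∀ k : ℕ, 1 ≤ k →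
      (Colorable G k ↔
        (∏ j : Fin n, (X j : MvPolynomial (Fin n) K)) ^ (k - 1) ∈ coverIdeal K G ^ k) := by
    intro k hk
    constructor
    · -- forward: a coloring gives k covers whose product is m^(k-1)
      rintro ⟨c, hc⟩
      set W : Fin k → Finset (Fin n) := fun i => Finset.univ.filter (fun j => c j ≠ i) with hWdef
      have hWcover : ∀ i, IsCover G (W i) := by
        intro i e he
        obtain ⟨u, hu, v, hv, huv⟩ := hc e he (hcard e he)
        by_cases h : c u = i
        · exact ⟨v, Finset.mem_inter.2 ⟨by simp [hWdef, h ▸ huv.symm, fun hh => huv (h ▸ hh)], hv⟩⟩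
        · exact ⟨u, Finset.mem_inter.2 ⟨by simp [hWdef, h], hu⟩⟩
      have hexp : (k - 1) • coverExp (Finset.univ : Finset (Fin n)) =
          ∑ i, coverExp (W i) := by
        ext j
        rw [Finsupp.smul_apply, Finset.sum_apply']
        simp only [coverExp_apply, Finset.mem_univ, if_true, smul_eq_mul, mul_one]
        have : ∑ i : Fin k, (if j ∈ W i then 1 else 0) =
            (Finset.univ.filter (fun i : Fin k => j ∈ W i)).card := by
          rw [Finset.card_filter]
        rw [this]
        have : Finset.univ.filter (fun i : Fin k => j ∈ W i) =
            Finset.univ.erase (c j) := by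
          ext i
          simp [hWdef, Finset.mem_erase, eq_comm, and_comm]
        rw [this, Finset.card_erase_of_mem (Finset.mem_univ _), Finset.card_univ,
          Fintype.card_fin]
      rw [hmpow k, hexp, monomial_sum_one]
      have : (coverIdeal K G) ^ k = ∏ _i : Fin k, coverIdeal K G := by
        rw [Finset.prod_const, Finset.card_univ, Fintype.card_fin]
      rw [this]
      apply Ideal.prod_mem_prod
      intro i _
      rw [monomial_coverExp]
      exact Ideal.subset_span ⟨W i, hWcover i, rfl⟩
    · -- backward: extract covers and build a coloring
      intro hmem
      have h := coverIdeal_pow_le K G k hmem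
      rw [hmpow k, mem_ideal_span_monomial_image] at h
      have hsupp : ((k - 1) • coverExp (Finset.univ : Finset (Fin n))) ∈
          (monomial ((k - 1) • coverExp (Finset.univ : Finset (Fin n)))
            (1 : K)).support := by
        rw [support_monomial, if_neg one_ne_zero]
        exact Finset.mem_singleton_self _
      obtain ⟨d, ⟨W, hWcover, rfl⟩, hle⟩ := h _ hsupp
      -- every vertex avoids some cover
      have hav : ∀ j : Fin n, ∃ i : Fin k, j ∉ W i := by
        intro j
        by_contra hcon
        push_neg at hcon
        have h1 : (∑ i, coverExp (W i)) j = k := by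
          rw [Finset.sum_apply']
          simp [coverExp_apply, hcon]
        have h2 : (∑ i, coverExp (W i)) j ≤ k - 1 := by
          have := hle j
          simpa [coverExp_apply] using this
        omega
      choose c hcj using hav
      refine ⟨c, fun e he _ => ?_⟩
      by_contra hcon
      push_neg at hcon
      obtain ⟨v₀, hv₀⟩ := G.nonempty_of_mem e he
      obtain ⟨v, hv⟩ := hWcover (c v₀) e he
      rw [Finset.mem_inter] at hv
      exact (hcon v₀ hv₀ v hv.2 ▸ hcj v) hv.1
  refine ⟨main, ?_⟩
  have hset : {k : ℕ | Colorable G k} =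
      {k : ℕ | 1 ≤ k ∧
        (∏ j : Fin n, (X j : MvPolynomial (Fin n) K)) ^ (k - 1) ∈ coverIdeal K G ^ k} := by
    ext k
    simp only [Set.mem_setOf_eq]
    constructor
    · intro hc
      have hk : 1 ≤ k := by
        rcases Nat.eq_zero_or_pos k with rfl | h
        · obtain ⟨c, _⟩ := hc
          exact (c ⟨0, hn⟩).elim0
        · exact h
      exact ⟨hk, (main k hk).1 hc⟩
    · rintro ⟨hk, hmem⟩
      exact (main k hk).2 hmem
  rw [hset]
end

section
/- Let G be the odd cycle on the vertices x_1, ..., x_{2ℓ−1} (with edges x_i x_{i+1}, indices mod 2ℓ−1), and let J = J(G) be its cover ideal in S = K[x_1, ..., x_{2ℓ−1}]. Then J^2 has the primary decomposition J^2 = [⋂_{i=1}^{2ℓ−1} (x_i, x_{i+1})^2] ∩ (x_1^2, ..., x_{2ℓ−1}^2), where indices are taken modulo 2ℓ−1. -/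
open MvPolynomial Pointwise

/-- The cover ideal of the odd cycle on the vertices `ZMod (2ℓ-1)` (whose edges are the
pairs `{i, i+1}`, indices modulo `2ℓ-1`): it is generated by the squarefree monomials
corresponding to the vertex covers, i.e. the sets `w` meeting every edge. -/
noncomputable def cycleCoverIdeal (K : Type*) [Field K] (ℓ : ℕ) :
    Ideal (MvPolynomial (ZMod (2 * ℓ - 1)) K) :=
  Ideal.span {m | ∃ w : Finset (ZMod (2 * ℓ - 1)),
    (∀ i : ZMod (2 * ℓ - 1), i ∈ w ∨ i + 1 ∈ w) ∧ m = ∏ i ∈ w, X i}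

namespace OddCycleAux

open Finset

/-- Run-length of consecutive `d = 1` values along the cycle, starting at `k`. -/
def cycRun {n : ℕ} (d : ZMod n → ℕ) (k : ZMod n) : ℕ → ℕ
  | 0 => 0
  | (m+1) => if d (k + ((m+1 : ℕ) : ZMod n)) = 1 then cycRun d k m + 1 else 0

lemma exists_two_covers {n : ℕ} [NeZero n] (d : ZMod n → ℕ)
    (h2 : ∀ i : ZMod n, 2 ≤ d i + d (i + 1)) (k : ZMod n) (hk : 2 ≤ d k) :
    ∃ w₁ w₂ : Finset (ZMod n), (∀ i, i ∈ w₁ ∨ i + 1 ∈ w₁) ∧ (∀ i, i ∈ w₂ ∨ i + 1 ∈ w₂) ∧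
      ∀ i, (if i ∈ w₁ then 1 else 0) + (if i ∈ w₂ then 1 else 0) ≤ d i := by
  classical
  set ρ : ZMod n → ℕ := fun i => cycRun d k (i - k).val with hρ
  have hstep : ∀ i : ZMod n, d i = 1 → d (i + 1) = 1 → ρ (i + 1) = ρ i + 1 := by
    intro i hi hi1
    have hik : i + 1 ≠ k := by rintro rfl; omega
    have hval : (i + 1 - k).val = (i - k).val + 1 := by
      have hlt : (i - k).val + 1 < n := by
        rcases lt_or_ge ((i - k).val + 1) n with h | h
        · exact h
        · exfalso
          have hv : (i - k).val + 1 = n := by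
            have := ZMod.val_lt (i - k)
            omega
          apply hik
          have h0 : ((i - k) : ZMod n) + 1 = 0 := by
            have h1 : (((i - k).val + 1 : ℕ) : ZMod n) = ((n : ℕ) : ZMod n) := by rw [hv]
            rwa [Nat.cast_add, Nat.cast_one, ZMod.natCast_val, ZMod.cast_id,
              ZMod.natCast_self] at h1
          have h2' : i + 1 - k = 0 := by linear_combination h0
          have h3 := sub_eq_zero.mp h2'
          exact h3
      have heq : i + 1 - k = (i - k) + 1 := by ring
      rw [heq, ZMod.val_add, ZMod.val_one_eq_one_mod,
        Nat.mod_eq_of_lt (show 1 < n by omega), Nat.mod_eq_of_lt hlt]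
    have hcast : k + (((i - k).val + 1 : ℕ) : ZMod n) = i + 1 := by
      push_cast
      rw [ZMod.natCast_val, ZMod.cast_id]
      ring
    show cycRun d k ((i + 1 - k).val) = _
    rw [hval]
    show (if d (k + (((i - k).val + 1 : ℕ) : ZMod n)) = 1 then cycRun d k (i - k).val + 1 else 0) = _
    rw [hcast, if_pos hi1]
  refine ⟨univ.filter (fun i => 2 ≤ d i ∨ (d i = 1 ∧ Even (ρ i))),
    univ.filter (fun i => 2 ≤ d i ∨ (d i = 1 ∧ ¬ Even (ρ i))), ?_, ?_, ?_⟩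
  · intro i
    simp only [mem_filter, mem_univ, true_and]
    rcases Nat.lt_or_ge (d i) 2 with hlt | hge
    · interval_cases hdi : d i
      · right; left; have := h2 i; omega
      · by_cases he : Even (ρ i)
        · exact Or.inl (Or.inr ⟨rfl, he⟩)
        · right
          rcases Nat.lt_or_ge (d (i+1)) 2 with hlt1 | hge1
          · have hd1 : d (i + 1) = 1 := by have := h2 i; omega
            right
            refine ⟨hd1, ?_⟩
            rw [hstep i hdi hd1]
            exact Nat.even_add_one.mpr he
          · exact Or.inl hge1
    · exact Or.inl (Or.inl hge)
  · intro i
    simp only [mem_filter, mem_univ, true_and]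
    rcases Nat.lt_or_ge (d i) 2 with hlt | hge
    · interval_cases hdi : d i
      · right; left; have := h2 i; omega
      · by_cases he : Even (ρ i)
        · right
          rcases Nat.lt_or_ge (d (i+1)) 2 with hlt1 | hge1
          · have hd1 : d (i + 1) = 1 := by have := h2 i; omega
            right
            refine ⟨hd1, ?_⟩
            rw [hstep i hdi hd1]
            simpa using Nat.even_add_one.not.mpr (by simpa using he)
          · exact Or.inl hge1
        · exact Or.inl (Or.inr ⟨rfl, he⟩)
    · exact Or.inl (Or.inl hge)
  · intro i
    simp only [mem_filter, mem_univ, true_and]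
    rcases Nat.lt_or_ge (d i) 2 with hlt | hge
    · interval_cases hdi : d i
      · simp
      · by_cases he : Even (ρ i) <;> simp [he]
    · split_ifs <;> omega

/-- The exponent vector of the squarefree monomial on `w`. -/
noncomputable def chi {σ : Type*} (w : Finset σ) : σ →₀ ℕ := ∑ i ∈ w, Finsupp.single i 1

lemma chi_apply {σ : Type*} [DecidableEq σ] (w : Finset σ) (j : σ) :
    chi w j = if j ∈ w then 1 else 0 := by
  classical
  rw [chi, Finsupp.finset_sum_apply]
  simp [Finsupp.single_apply]

lemma prod_X_eq {σ K : Type*} [CommSemiring K] (w : Finset σ) :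
    ∏ i ∈ w, (X i : MvPolynomial σ K) = monomial (chi w) 1 := by
  classical
  induction w using Finset.induction_on with
  | empty => simp [chi, monomial_zero', C_1]
  | @insert a s' hx ih =>
      have hch : chi (insert a s') = Finsupp.single a 1 + chi s' := by
        rw [chi, chi, Finset.sum_insert hx]
      rw [Finset.prod_insert hx, ih, hch,
        show (X a : MvPolynomial σ K) = monomial (Finsupp.single a 1) 1 from
          (pow_one _).symm.trans X_pow_eq_monomial,
        monomial_mul, one_mul]

lemma cover_card {n ℓ : ℕ} [NeZero n] (hn : n = 2 * ℓ - 1) (hℓ : 2 ≤ ℓ)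
    (w : Finset (ZMod n)) (hw : ∀ i, i ∈ w ∨ i + 1 ∈ w) : ℓ ≤ w.card := by
  classical
  have hinj : Function.Injective (fun x : ZMod n => x + 1) := add_left_injective 1
  have hdisj : Disjoint wᶜ (wᶜ.image (fun x => x + 1)) := by
    rw [Finset.disjoint_left]
    intro a ha hb
    rcases Finset.mem_image.mp hb with ⟨y, hy, rfl⟩
    rcases hw y with h | h
    · exact (Finset.mem_compl.mp hy) h
    · exact (Finset.mem_compl.mp ha) h
  have hcard := Finset.card_union_of_disjoint hdisj
  have h1 : (wᶜ ∪ wᶜ.image (fun x => x + 1)).card ≤ n := by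
    have h := Finset.card_le_univ (wᶜ ∪ wᶜ.image (fun x => x + 1))
    rwa [ZMod.card] at h
  have h2 : (wᶜ.image (fun x => x + 1)).card = wᶜ.card :=
    Finset.card_image_of_injective _ hinj
  have h3 : wᶜ.card = n - w.card := by rw [Finset.card_compl, ZMod.card]
  have h4 : w.card ≤ n := by
    have h := Finset.card_le_univ w
    rwa [ZMod.card] at h
  omega

lemma span_monomial_mul {σ K : Type*} [CommSemiring K] (S T : Set (σ →₀ ℕ)) :
    Ideal.span ((fun s => monomial s (1 : K)) '' S) *
      Ideal.span ((fun s => monomial s (1 : K)) '' T)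
      = Ideal.span ((fun s => monomial s (1 : K)) '' (S + T)) := by
  rw [Ideal.span_mul_span']
  congr 1
  ext m
  simp only [Set.mem_mul, Set.mem_image, Set.mem_add]
  constructor
  · rintro ⟨x, ⟨s, hs, rfl⟩, y, ⟨t, ht, rfl⟩, rfl⟩
    exact ⟨s + t, ⟨s, hs, t, ht, rfl⟩, by rw [monomial_mul, one_mul]⟩
  · rintro ⟨u, ⟨s, hs, t, ht, rfl⟩, rfl⟩
    exact ⟨monomial s 1, ⟨s, hs, rfl⟩, monomial t 1, ⟨t, ht, rfl⟩, by rw [monomial_mul, one_mul]⟩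

lemma sq_mem {σ K : Type*} [CommSemiring K] (f : MvPolynomial σ K) :
    f ∈ Ideal.span {p : MvPolynomial σ K | ∃ j, p = X j ^ 2} ↔
      ∀ d ∈ f.support, ∃ j, 2 ≤ d j := by
  classical
  have hset : {p : MvPolynomial σ K | ∃ j, p = X j ^ 2}
      = (fun s => monomial s (1 : K)) '' {s | ∃ j, s = Finsupp.single j 2} := by
    ext p
    simp only [Set.mem_setOf_eq, Set.mem_image]
    constructor
    · rintro ⟨j, rfl⟩; exact ⟨Finsupp.single j 2, ⟨j, rfl⟩, X_pow_eq_monomial.symm⟩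
    · rintro ⟨s, ⟨j, rfl⟩, rfl⟩; exact ⟨j, X_pow_eq_monomial.symm⟩
  rw [hset, mem_ideal_span_monomial_image]
  refine forall₂_congr fun d hd => ?_
  constructor
  · rintro ⟨s, ⟨j, rfl⟩, hle⟩
    exact ⟨j, by simpa using Finsupp.le_def.mp hle j⟩
  · rintro ⟨j, hj⟩
    exact ⟨Finsupp.single j 2, ⟨j, rfl⟩, Finsupp.single_le_iff.mpr hj⟩

lemma edge_pow_mem {n : ℕ} {K : Type*} [CommSemiring K] (i : ZMod n) (hne : i + 1 ≠ i)
    (f : MvPolynomial (ZMod n) K) :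
    f ∈ (Ideal.span {(X i : MvPolynomial (ZMod n) K), X (i + 1)}) ^ 2 ↔
      ∀ d ∈ f.support, 2 ≤ d i + d (i + 1) := by
  classical
  have hX : ∀ j : ZMod n, (X j : MvPolynomial (ZMod n) K) = monomial (Finsupp.single j 1) 1 :=
    fun j => (pow_one _).symm.trans X_pow_eq_monomial
  have hpair : ({(X i : MvPolynomial (ZMod n) K), X (i + 1)} : Set _)
      = (fun s => monomial s (1 : K)) '' {Finsupp.single i 1, Finsupp.single (i + 1) 1} := by
    rw [Set.image_pair, hX i, hX (i + 1)]
  rw [pow_two, hpair, span_monomial_mul, mem_ideal_span_monomial_image]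
  refine forall₂_congr fun d hd => ?_
  constructor
  · rintro ⟨s, hs, hle⟩
    rw [Set.mem_add] at hs
    obtain ⟨u, hu, v, hv, rfl⟩ := hs
    have h1 := Finsupp.le_def.mp hle i
    have h2 := Finsupp.le_def.mp hle (i + 1)
    simp only [Set.mem_insert_iff, Set.mem_singleton_iff] at hu hv
    rcases hu with rfl | rfl <;> rcases hv with rfl | rfl <;>
      simp only [Finsupp.add_apply, Finsupp.single_apply] at h1 h2 <;>
      simp [hne, Ne.symm hne] at h1 h2 <;> omega
  · intro h
    by_cases h2i : 2 ≤ d i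
    · refine ⟨Finsupp.single i 1 + Finsupp.single i 1,
        Set.add_mem_add (Set.mem_insert _ _) (Set.mem_insert _ _), ?_⟩
      rw [← Finsupp.single_add]
      exact Finsupp.single_le_iff.mpr (by omega)
    · by_cases h2i1 : 2 ≤ d (i + 1)
      · refine ⟨Finsupp.single (i + 1) 1 + Finsupp.single (i + 1) 1,
          Set.add_mem_add (Set.mem_insert_of_mem _ rfl) (Set.mem_insert_of_mem _ rfl), ?_⟩
        rw [← Finsupp.single_add]
        exact Finsupp.single_le_iff.mpr (by omega)
      · refine ⟨Finsupp.single i 1 + Finsupp.single (i + 1) 1,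
          Set.add_mem_add (Set.mem_insert _ _) (Set.mem_insert_of_mem _ rfl), ?_⟩
        rw [Finsupp.le_def]
        intro a
        simp only [Finsupp.add_apply, Finsupp.single_apply]
        split_ifs with hA hB hB
        · exact absurd (hB.trans hA.symm) hne
        · subst hA; omega
        · subst hB; omega
        · omega

lemma J2_mem {K : Type*} [Field K] {ℓ : ℕ} (f : MvPolynomial (ZMod (2 * ℓ - 1)) K) :
    f ∈ cycleCoverIdeal K ℓ ^ 2 ↔ ∀ d ∈ f.support,
      ∃ w₁ w₂ : Finset (ZMod (2 * ℓ - 1)),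
        (∀ i, i ∈ w₁ ∨ i + 1 ∈ w₁) ∧ (∀ i, i ∈ w₂ ∨ i + 1 ∈ w₂) ∧ chi w₁ + chi w₂ ≤ d := by
  classical
  have hgen : {m : MvPolynomial (ZMod (2 * ℓ - 1)) K |
        ∃ w : Finset (ZMod (2 * ℓ - 1)), (∀ i, i ∈ w ∨ i + 1 ∈ w) ∧ m = ∏ i ∈ w, X i}
      = (fun s => monomial s (1 : K)) ''
        {s | ∃ w : Finset (ZMod (2 * ℓ - 1)), (∀ i, i ∈ w ∨ i + 1 ∈ w) ∧ s = chi w} := by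
    ext m
    simp only [Set.mem_setOf_eq, Set.mem_image]
    constructor
    · rintro ⟨w, hw, rfl⟩
      exact ⟨chi w, ⟨w, hw, rfl⟩, (prod_X_eq w).symm⟩
    · rintro ⟨s, ⟨w, hw, rfl⟩, rfl⟩
      exact ⟨w, hw, (prod_X_eq w).symm⟩
  rw [cycleCoverIdeal, hgen, pow_two, span_monomial_mul, mem_ideal_span_monomial_image]
  refine forall₂_congr fun d hd => ?_
  constructor
  · rintro ⟨s, hs, hsle⟩
    rw [Set.mem_add] at hs
    obtain ⟨u, ⟨w₁, hw₁, rfl⟩, v, ⟨w₂, hw₂, rfl⟩, rfl⟩ := hs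
    exact ⟨w₁, w₂, hw₁, hw₂, hsle⟩
  · rintro ⟨w₁, w₂, hw₁, hw₂, hle⟩
    exact ⟨_, Set.add_mem_add ⟨w₁, hw₁, rfl⟩ ⟨w₂, hw₂, rfl⟩, hle⟩

end OddCycleAux

open OddCycleAux in
/-- Let `G` be the odd cycle on `x_1, …, x_{2ℓ-1}` with cover ideal
`J = J(G)`.  Then `J² = [⋂_i (x_i, x_{i+1})²] ∩ (x_1², …, x_{2ℓ-1}²)`, indices taken
modulo `2ℓ-1`. -/
theorem odd_cycle_coverIdeal_sq_decomposition (K : Type*) [Field K] (ℓ : ℕ) (hℓ : 2 ≤ ℓ) :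
    cycleCoverIdeal K ℓ ^ 2 =
      (⨅ i : ZMod (2 * ℓ - 1),
        (Ideal.span {(X i : MvPolynomial (ZMod (2 * ℓ - 1)) K), X (i + 1)}) ^ 2) ⊓
      Ideal.span {p | ∃ i : ZMod (2 * ℓ - 1), p = (X i : MvPolynomial (ZMod (2 * ℓ - 1)) K) ^ 2} := by
  classical
  haveI : NeZero (2 * ℓ - 1) := ⟨by omega⟩
  haveI : Fact (1 < 2 * ℓ - 1) := ⟨by omega⟩
  have hne : ∀ i : ZMod (2 * ℓ - 1), i + 1 ≠ i := by
    intro i h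
    exact one_ne_zero (by linear_combination h)
  ext f
  rw [Submodule.mem_inf, Submodule.mem_iInf, J2_mem, sq_mem]
  have hEdge : (∀ i : ZMod (2 * ℓ - 1),
      f ∈ (Ideal.span {(X i : MvPolynomial (ZMod (2 * ℓ - 1)) K), X (i + 1)}) ^ 2) ↔
      ∀ i : ZMod (2 * ℓ - 1), ∀ d ∈ f.support, 2 ≤ d i + d (i + 1) :=
    forall_congr' fun i => edge_pow_mem i (hne i) f
  rw [hEdge]
  constructor
  · intro h
    constructor
    · intro i d hd
      obtain ⟨w₁, w₂, hw₁, hw₂, hle⟩ := h d hd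
      have l1 := Finsupp.le_def.mp hle i
      have l2 := Finsupp.le_def.mp hle (i + 1)
      simp only [Finsupp.add_apply, chi_apply] at l1 l2
      have c1 : 1 ≤ (if i ∈ w₁ then 1 else 0) + (if i + 1 ∈ w₁ then 1 else 0) := by
        rcases hw₁ i with h' | h' <;> simp [h']
      have c2 : 1 ≤ (if i ∈ w₂ then 1 else 0) + (if i + 1 ∈ w₂ then 1 else 0) := by
        rcases hw₂ i with h' | h' <;> simp [h']
      omega
    · intro d hd
      obtain ⟨w₁, w₂, hw₁, hw₂, hle⟩ := h d hd
      have hc1 := cover_card rfl hℓ w₁ hw₁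
      have hc2 := cover_card rfl hℓ w₂ hw₂
      have hnonempty : (w₁ ∩ w₂).Nonempty := by
        rw [← Finset.card_pos]
        have hu : (w₁ ∪ w₂).card ≤ 2 * ℓ - 1 := by
          have h' := Finset.card_le_univ (w₁ ∪ w₂)
          rwa [ZMod.card] at h'
        have hi := Finset.card_union_add_card_inter w₁ w₂
        omega
      obtain ⟨j, hj⟩ := hnonempty
      refine ⟨j, ?_⟩
      have hlej := Finsupp.le_def.mp hle j
      rw [Finset.mem_inter] at hj
      simpa [Finsupp.add_apply, chi_apply, hj.1, hj.2] using hlej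
  · rintro ⟨hE, hS⟩ d hd
    obtain ⟨k, hk⟩ := hS d hd
    obtain ⟨w₁, w₂, hw₁, hw₂, hb⟩ :=
      exists_two_covers (fun i => d i) (fun i => hE i d hd) k hk
    refine ⟨w₁, w₂, hw₁, hw₂, Finsupp.le_def.mpr fun j => ?_⟩
    have := hb j
    simp only [Finsupp.add_apply, chi_apply]
    omega
end
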